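/- arXiv:1604.00052 — 2 statements merged into one kernel-verified Lean document; each statement's English description precedes it below -/
import Mathlib

section
/- For every p ∈ F^{r(Σ+d)}, the Euler-type identity T_p p = d · f(p) holds. Moreover, if p is norm-balanced (within each block b_i = (a_i^{(1)}, …, a_i^{(d)}) all factor norms ‖a_i^{(1)}‖ = ⋯ = ‖a_i^{(d)}‖ are equal), then p is orthogonal to every kernel basis vector: ⟨k_i^{(k)} ⊗ e_i, p⟩ = 0 for all 2 ≤ k ≤ d and 1 ≤ i ≤ r, i.e., K^H p = 0. -/
open scoped BigOperators
open scoped Matrix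

noncomputable section

namespace TensorCond

variable {𝕜 : Type*} [RCLike 𝕜]
variable {d r : ℕ} {n : Fin d → ℕ}

/-- The space `F^{r(Σ+d)}` of vectorized factor matrices: `r` blocks,
each consisting of `d` factors `a_i^{(k)} ∈ F^{n_k}`. -/
abbrev Vecr (𝕜 : Type*) (d r : ℕ) (n : Fin d → ℕ) : Type _ :=
  Fin r → (k : Fin d) → Fin (n k) → 𝕜

/-- The tensor space `F^{n₁} ⊗ ⋯ ⊗ F^{n_d} ≅ F^Π`. -/
abbrev Tensor (𝕜 : Type*) (d : ℕ) (n : Fin d → ℕ) : Type _ :=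
  ((k : Fin d) → Fin (n k)) → 𝕜

/-- Column index of Terracini's matrix. -/
abbrev ColIdx (d r : ℕ) (n : Fin d → ℕ) : Type _ :=
  Fin r × Σ k : Fin d, Fin (n k)

/-- The tensor computation map `f`. -/
def tmap (p : Vecr 𝕜 d r n) : Tensor 𝕜 d n :=
  fun x => ∑ i, ∏ k, p i k (x k)

/-- Terracini's matrix `T_p`. -/
def terracini (p : Vecr 𝕜 d r n) :
    Matrix ((k : Fin d) → Fin (n k)) (ColIdx d r n) 𝕜 :=
  Matrix.of fun x q =>
    (if x q.2.1 = q.2.2 then (1 : 𝕜) else 0) *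
      ∏ l ∈ Finset.univ.erase q.2.1, p q.1 l (x l)

/-- Flattening of a representative vector. -/
def flat (p : Vecr 𝕜 d r n) : ColIdx d r n → 𝕜 :=
  fun q => p q.1 q.2.1 q.2.2

/-- Flattening as a linear map. -/
def flatLM (𝕜 : Type*) [RCLike 𝕜] (d r : ℕ) (n : Fin d → ℕ) :
    Vecr 𝕜 d r n →ₗ[𝕜] (ColIdx d r n → 𝕜) where
  toFun := flat
  map_add' _ _ := rfl
  map_smul' _ _ := rfl

/-- Euclidean norm of a finitely supported vector. -/
def eunorm {ι : Type*} [Fintype ι] (v : ι → 𝕜) : ℝ :=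
  Real.sqrt (∑ i, ‖v i‖ ^ 2)

/-- Euclidean norm of one block. -/
def bnorm (b : (k : Fin d) → Fin (n k) → 𝕜) : ℝ :=
  Real.sqrt (∑ k, ∑ j, ‖b k j‖ ^ 2)

/-- Euclidean norm on `F^{r(Σ+d)}`. -/
def vnorm (p : Vecr 𝕜 d r n) : ℝ :=
  Real.sqrt (∑ i, ∑ k, ∑ j, ‖p i k j‖ ^ 2)

/-- Euclidean (Frobenius) norm on the tensor space. -/
def tnorm (A : Tensor 𝕜 d n) : ℝ :=
  Real.sqrt (∑ x, ‖A x‖ ^ 2)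

/-- Scaling part of the group `𝒯`. -/
def IsScaling (s : Fin r → Fin d → 𝕜) : Prop :=
  (∀ i k, s i k ≠ 0) ∧ ∀ i, ∏ k, s i k = 1

/-- Action of an element of `𝒯`. -/
def act (π : Equiv.Perm (Fin r)) (s : Fin r → Fin d → 𝕜) (q : Vecr 𝕜 d r n) :
    Vecr 𝕜 d r n :=
  fun i k j => s i k * q (π i) k j

/-- `p ∼ q`. -/
def rel (p q : Vecr 𝕜 d r n) : Prop :=
  ∃ (π : Equiv.Perm (Fin r)) (s : Fin r → Fin d → 𝕜), IsScaling s ∧ p = act π s q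

/-- The distance measure `d(p,q) = inf_{T ∈ 𝒯} ‖p − Tq‖`. -/
def gdist (p q : Vecr 𝕜 d r n) : ℝ :=
  sInf { x | ∃ (π : Equiv.Perm (Fin r)) (s : Fin r → Fin d → 𝕜),
    IsScaling s ∧ x = vnorm (p - act π s q) }

/-- Tensors of rank at most `r`. -/
def SecZ (𝕜 : Type*) [RCLike 𝕜] (d r : ℕ) (n : Fin d → ℕ) : Set (Tensor 𝕜 d n) :=
  Set.range (tmap (𝕜 := 𝕜) (d := d) (r := r) (n := n))

/-- `r`-identifiability. -/
def Identifiable {𝕜 : Type*} [RCLike 𝕜] {d : ℕ} {n : Fin d → ℕ} (r : ℕ)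
    (A : Tensor 𝕜 d n) : Prop :=
  ∀ x y : Vecr 𝕜 d r n, tmap x = A → tmap y = A → rel x y

/-- `d(p, f†(A))`. -/
def fdist (p : Vecr 𝕜 d r n) (A : Tensor 𝕜 d n) : ℝ :=
  sInf { x | ∃ q : Vecr 𝕜 d r n, tmap q = A ∧ x = gdist p q }

/-- Multiset of singular values of a matrix. -/
def singularValues {m l : Type*} [Fintype m] [Fintype l] [DecidableEq l]
    (M : Matrix m l 𝕜) : Multiset ℝ :=
  Multiset.map
    (fun i => Real.sqrt ((Matrix.isHermitian_conjTranspose_mul_self M).eigenvalues i))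
    Finset.univ.val

/-- `j`-th largest singular value (1-indexed). -/
def nthSV {m l : Type*} [Fintype m] [Fintype l] [DecidableEq l]
    (M : Matrix m l 𝕜) (j : ℕ) : ℝ :=
  (((singularValues M).sort (· ≤ ·)).reverse).getD (j - 1) 0

/-- Spectral norm. -/
def specNorm {m l : Type*} [Fintype m] [Fintype l] (M : Matrix m l 𝕜) : ℝ :=
  sSup { x | ∃ v : l → 𝕜, eunorm v = 1 ∧ x = eunorm (M.mulVec v) }

/-- Kernel vector `k_i^{(k)}` (one block). -/
def kvec [NeZero d] (p : Vecr 𝕜 d r n) (i : Fin r) (k : Fin d) :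
    (l : Fin d) → Fin (n l) → 𝕜 :=
  fun l j =>
    if h0 : l = 0 then p i 0 (h0 ▸ j)
    else if hk : l = k then -(p i k (hk ▸ j)) else 0

/-- Kernel basis vector `k_i^{(k)} ⊗ e_i` as a flattened column vector. -/
def kcol [NeZero d] (p : Vecr 𝕜 d r n) (i : Fin r) (k : Fin d) :
    ColIdx d r n → 𝕜 :=
  fun q => if q.1 = i then kvec p i k q.2.1 q.2.2 else 0

/-- `P ⊗ I_{Σ+d}` for a permutation `π`. -/
def permMx (𝕜 : Type*) [RCLike 𝕜] (d r : ℕ) (n : Fin d → ℕ)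
    (π : Equiv.Perm (Fin r)) : Matrix (ColIdx d r n) (ColIdx d r n) 𝕜 :=
  Matrix.of fun x y => if y.1 = π x.1 ∧ x.2 = y.2 then 1 else 0

/-- Block diagonal scaling matrix `diag(D_1, …, D_r)`. -/
def scalMx (s : Fin r → Fin d → 𝕜) : Matrix (ColIdx d r n) (ColIdx d r n) 𝕜 :=
  Matrix.diagonal fun x => s x.1 x.2.1

/-- The set `𝒯 = 𝒫ℬ` of matrices. -/
def Tset (𝕜 : Type*) [RCLike 𝕜] (d r : ℕ) (n : Fin d → ℕ) :
    Set (Matrix (ColIdx d r n) (ColIdx d r n) 𝕜) :=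
  { M | ∃ (π : Equiv.Perm (Fin r)) (s : Fin r → Fin d → 𝕜),
      IsScaling s ∧ M = permMx 𝕜 d r n π * scalMx s }

/-- The `i`-th block `T_i` of Terracini's matrix. -/
def terraciniBlock (p : Vecr 𝕜 d r n) (i : Fin r) :
    Matrix ((k : Fin d) → Fin (n k)) (Σ k : Fin d, Fin (n k)) 𝕜 :=
  Matrix.of fun x q =>
    (if x q.1 = q.2 then (1 : 𝕜) else 0) * ∏ l ∈ Finset.univ.erase q.1, p i l (x l)

/-- Kernel-basis matrix `K = [k^{(2)} ⋯ k^{(d)}]` (single point, r = 1). -/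
def Kmx [NeZero d] (a : (k : Fin d) → Fin (n k) → 𝕜) :
    Matrix (Σ k : Fin d, Fin (n k)) {k : Fin d // k ≠ 0} 𝕜 :=
  Matrix.of fun q j => kvec (fun _ : Fin 1 => a) 0 j.1 q.1 q.2

/-- the Euler-type identity `T_p p = d·f(p)` holds for every `p`, and a
norm-balanced `p` is orthogonal to every kernel basis vector `k_i^{(k)} ⊗ e_i`,
i.e. `Kᴴ p = 0`. -/
theorem euler_identity_and_kernel_orthogonality [NeZero d]
    (hd : 2 ≤ d) (hn : ∀ k, 2 ≤ n k) (hr : 1 ≤ r)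
    (p : Vecr 𝕜 d r n) :
    ((terracini p).mulVec (flat p) = fun x => (d : 𝕜) * tmap p x)
    ∧ ((∀ (i : Fin r) (k k' : Fin d), eunorm (p i k) = eunorm (p i k')) →
        ∀ (i : Fin r) (k : Fin d), k ≠ 0 →
          ∑ q : ColIdx d r n, (starRingEnd 𝕜) (kcol p i k q) * flat p q = 0) := by
  constructor
  · funext x
    simp only [Matrix.mulVec, dotProduct, terracini, flat, tmap, Matrix.of_apply]
    rw [Fintype.sum_prod_type, Finset.mul_sum]
    refine Finset.sum_congr rfl fun i _ => ?_
    rw [← Finset.univ_sigma_univ, Finset.sum_sigma]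
    have : ∀ k : Fin d,
        (∑ j : Fin (n k), ((if x k = j then (1:𝕜) else 0) *
          ∏ l ∈ Finset.univ.erase k, p i l (x l)) * p i k j)
        = ∏ l, p i l (x l) := by
      intro k
      rw [Finset.sum_eq_single (x k)]
      · simp [Finset.prod_erase_mul _ _ (Finset.mem_univ k)]
      · intro j _ hj
        simp [Ne.symm hj]
      · simp
    simp only [this, Finset.sum_const, Finset.card_univ, Fintype.card_fin, nsmul_eq_mul]
  · intro hbal i k hk
    have hsum : (∑ j, ‖p i 0 j‖ ^ 2) = ∑ j, ‖p i k j‖ ^ 2 := by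
      have h := hbal i 0 k
      simp only [eunorm] at h
      exact (Real.sqrt_inj (Finset.sum_nonneg fun _ _ => sq_nonneg _)
        (Finset.sum_nonneg fun _ _ => sq_nonneg _)).mp h
    have h0k : (0 : Fin d) ≠ k := fun h => hk h.symm
    rw [Fintype.sum_prod_type]
    rw [Finset.sum_eq_single i]
    · simp only [kcol, if_pos rfl, if_true, flat]
      rw [← Finset.univ_sigma_univ, Finset.sum_sigma]
      rw [Finset.sum_eq_add (0 : Fin d) k h0k
        (by
          intro l _ hl
          apply Finset.sum_eq_zero
          intro j _
          simp [kvec, hl.1, hl.2])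
        (fun h => (h (Finset.mem_univ _)).elim) (fun h => (h (Finset.mem_univ _)).elim)]
      have e0 : (∑ j, (starRingEnd 𝕜) (kvec p i k 0 j) * p i 0 j)
          = ((∑ j, ‖p i 0 j‖ ^ 2 : ℝ) : 𝕜) := by
        push_cast
        refine Finset.sum_congr rfl fun j _ => ?_
        simp [kvec, RCLike.conj_mul]
      have ek : (∑ j, (starRingEnd 𝕜) (kvec p i k k j) * p i k j)
          = -((∑ j, ‖p i k j‖ ^ 2 : ℝ) : 𝕜) := by
        push_cast
        rw [← Finset.sum_neg_distrib]
        refine Finset.sum_congr rfl fun j _ => ?_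
        simp [kvec, Ne.symm h0k, hk, RCLike.conj_mul]
      rw [e0, ek, hsum]
      ring
    · intro i' _ hi'
      apply Finset.sum_eq_zero
      intro q _
      simp [kcol, hi']
    · simp

end TensorCond
end
end

section
/- Let a^{(1)}, …, a^{(d)} ∈ F^{n_1}, …, F^{n_d} and let K = [k^{(2)} ⋯ k^{(d)}] ∈ F^{(Σ+d) × (d−1)} be the kernel-basis matrix. Then its Gram matrix is K^H K = diag(‖a^{(2)}‖², ‖a^{(3)}‖², …, ‖a^{(d)}‖²) + ‖a^{(1)}‖² · 𝟙𝟙^T, where 𝟙 ∈ ℝ^{d−1} is the all-ones vector. Consequently, every eigenvalue of K^H K is at least min_{2≤k≤d} ‖a^{(k)}‖², so the smallest singular value of K satisfies ς_{d−1}(K) ≥ min_{2≤k≤d} ‖a^{(k)}‖; in particular, when all a^{(k)} ≠ 0, the Moore–Penrose pseudoinverse satisfies ‖K^†‖₂ ≤ ( min_{2≤k≤d} ‖a^{(k)}‖ )^{-1}. -/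
open scoped BigOperators
open scoped Matrix

noncomputable section

namespace TensorCond

variable {𝕜 : Type*} [RCLike 𝕜]
variable {d r : ℕ} {n : Fin d → ℕ}

section Aux
variable [NeZero d]

lemma Kmx_apply_zero (a : (k : Fin d) → Fin (n k) → 𝕜) (j : {k : Fin d // k ≠ 0})
    (x : Fin (n 0)) : Kmx a ⟨0, x⟩ j = a 0 x := by
  simp [Kmx, Matrix.of_apply, kvec]

lemma Kmx_apply_self (a : (k : Fin d) → Fin (n k) → 𝕜) (j : {k : Fin d // k ≠ 0})
    (x : Fin (n j.1)) : Kmx a ⟨j.1, x⟩ j = -(a j.1 x) := by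
  simp only [Kmx, Matrix.of_apply, kvec]
  rw [dif_neg j.2]
  simp

lemma Kmx_apply_other (a : (k : Fin d) → Fin (n k) → 𝕜) (j : {k : Fin d // k ≠ 0})
    (l : Fin d) (hl0 : l ≠ 0) (hlj : l ≠ j.1) (x : Fin (n l)) : Kmx a ⟨l, x⟩ j = 0 := by
  simp only [Kmx, Matrix.of_apply, kvec]
  rw [dif_neg hl0, dif_neg hlj]

lemma gram_entry (a : (k : Fin d) → Fin (n k) → 𝕜) (j j' : {k : Fin d // k ≠ 0}) :
    ((Kmx a)ᴴ * Kmx a) j j'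
      = (if j = j' then ((∑ x, ‖a j.1 x‖ ^ 2 : ℝ) : 𝕜) else 0)
        + ((∑ x, ‖a 0 x‖ ^ 2 : ℝ) : 𝕜) := by
  rw [Matrix.mul_apply, ← Finset.univ_sigma_univ, Finset.sum_sigma]
  have key : ∀ l : Fin d, (∑ x : Fin (n l), (Kmx a)ᴴ j ⟨l, x⟩ * Kmx a ⟨l, x⟩ j')
      = (if l = 0 then ((∑ x, ‖a 0 x‖ ^ 2 : ℝ) : 𝕜) else 0)
        + (if l = j.1 ∧ l = j'.1 then ((∑ x : Fin (n l), ‖a l x‖ ^ 2 : ℝ) : 𝕜) else 0) := by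
    intro l
    simp only [Matrix.conjTranspose_apply]
    by_cases h0 : l = 0
    · subst h0
      rw [if_pos rfl, if_neg (by rintro ⟨h, -⟩; exact j.2 h.symm), add_zero]
      simp only [Kmx_apply_zero]
      push_cast
      simp [RCLike.star_def, RCLike.conj_mul]
    · rw [if_neg h0, zero_add]
      obtain ⟨jv, hj⟩ := j; obtain ⟨j'v, hj'⟩ := j'
      by_cases hlj : l = jv
      · subst hlj
        by_cases hlj' : l = j'v
        · subst hlj'
          rw [if_pos ⟨rfl, rfl⟩]
          have hterm : ∀ x : Fin (n l), star (Kmx a ⟨l, x⟩ ⟨l, hj⟩) * Kmx a ⟨l, x⟩ ⟨l, hj'⟩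
              = ((‖a l x‖ ^ 2 : ℝ) : 𝕜) := by
            intro x
            rw [Kmx_apply_self a ⟨l, hj⟩ x]
            simp [RCLike.star_def, RCLike.conj_mul]
          rw [Finset.sum_congr rfl fun x _ => hterm x]
          norm_cast
        · rw [if_neg (by tauto)]
          simp [Kmx_apply_other a ⟨j'v, hj'⟩ l h0 hlj']
      · rw [if_neg (by tauto)]
        simp [Kmx_apply_other a ⟨jv, hj⟩ l h0 hlj]
  rw [Finset.sum_congr rfl fun l _ => key l, Finset.sum_add_distrib]
  rw [Finset.sum_ite_eq' Finset.univ (0 : Fin d) fun _ => ((∑ x, ‖a 0 x‖ ^ 2 : ℝ) : 𝕜)]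
  simp only [Finset.mem_univ, if_true]
  by_cases hjj : j = j'
  · subst hjj
    simp only [and_self]
    rw [Finset.sum_ite_eq' Finset.univ j.1 fun l => ((∑ x : Fin (n l), ‖a l x‖ ^ 2 : ℝ) : 𝕜)]
    simp [add_comm]
  · have hz : (∑ l : Fin d, if l = j.1 ∧ l = j'.1
        then ((∑ x : Fin (n l), ‖a l x‖ ^ 2 : ℝ) : 𝕜) else 0) = 0 := by
      refine Finset.sum_eq_zero fun l _ => ?_
      rw [if_neg]
      rintro ⟨h1, h2⟩
      exact hjj (Subtype.ext (h1 ▸ h2 ▸ rfl))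
    rw [hz, if_neg hjj, add_zero, zero_add]


lemma eunorm_nonneg {ι : Type*} [Fintype ι] (v : ι → 𝕜) : 0 ≤ eunorm v := Real.sqrt_nonneg _

lemma eunorm_sq {ι : Type*} [Fintype ι] (v : ι → 𝕜) : eunorm v ^ 2 = ∑ i, ‖v i‖ ^ 2 :=
  Real.sq_sqrt (Finset.sum_nonneg fun i _ => sq_nonneg _)

lemma part1 (a : (k : Fin d) → Fin (n k) → 𝕜) :
    (Kmx a)ᴴ * Kmx a
      = Matrix.diagonal (fun j : {k : Fin d // k ≠ 0} => ((eunorm (a j.1) ^ 2 : ℝ) : 𝕜))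
        + ((eunorm (a 0) ^ 2 : ℝ) : 𝕜) •
            Matrix.of (fun _ _ : {k : Fin d // k ≠ 0} => (1 : 𝕜)) := by
  funext j j'
  rw [gram_entry]
  simp only [Matrix.add_apply, Matrix.diagonal_apply, Matrix.smul_apply, Matrix.of_apply,
    smul_eq_mul, mul_one, eunorm_sq]

lemma gram_quad (a : (k : Fin d) → Fin (n k) → 𝕜) (w : {k : Fin d // k ≠ 0} → 𝕜) :
    RCLike.re (dotProduct (star w) (((Kmx a)ᴴ * Kmx a) *ᵥ w))
      = ∑ j, (∑ x, ‖a j.1 x‖ ^ 2) * ‖w j‖ ^ 2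
        + (∑ x, ‖a 0 x‖ ^ 2) * ‖∑ j, w j‖ ^ 2 := by
  have h1 : dotProduct (star w) (((Kmx a)ᴴ * Kmx a) *ᵥ w)
      = ((∑ j, (∑ x, ‖a j.1 x‖ ^ 2) * ‖w j‖ ^ 2
          + (∑ x, ‖a 0 x‖ ^ 2) * ‖∑ j, w j‖ ^ 2 : ℝ) : 𝕜) := by
    have hmv : ∀ j, (((Kmx a)ᴴ * Kmx a) *ᵥ w) j
        = ((∑ x, ‖a j.1 x‖ ^ 2 : ℝ) : 𝕜) * w j
          + ((∑ x, ‖a 0 x‖ ^ 2 : ℝ) : 𝕜) * ∑ j', w j' := by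
      intro j
      simp only [Matrix.mulVec, dotProduct, gram_entry, add_mul, ite_mul, zero_mul,
        Finset.sum_add_distrib, Finset.sum_ite_eq Finset.univ j, Finset.mem_univ, if_true,
        Finset.mul_sum]
    simp only [dotProduct, Pi.star_apply, hmv, mul_add, Finset.sum_add_distrib]
    have e1 : ∀ j : {k : Fin d // k ≠ 0},
        star (w j) * (((∑ x, ‖a j.1 x‖ ^ 2 : ℝ) : 𝕜) * w j)
          = ((( ∑ x, ‖a j.1 x‖ ^ 2) * ‖w j‖ ^ 2 : ℝ) : 𝕜) := by
      intro j
      rw [mul_left_comm, RCLike.star_def, RCLike.conj_mul]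
      push_cast
      ring
    have e2 : (∑ j, star (w j) * (((∑ x, ‖a 0 x‖ ^ 2 : ℝ) : 𝕜) * ∑ j', w j'))
        = (((∑ x, ‖a 0 x‖ ^ 2) * ‖∑ j, w j‖ ^ 2 : ℝ) : 𝕜) := by
      rw [← Finset.sum_mul]
      have : (∑ j, star (w j)) = star (∑ j, w j) := by
        rw [star_sum]
      rw [this, mul_left_comm, RCLike.star_def, RCLike.conj_mul]
      push_cast
      ring
    rw [Finset.sum_congr rfl fun j _ => e1 j, e2]
    push_cast
    ring
  rw [h1, RCLike.ofReal_re]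


lemma fin_one_ne_zero (hd : 2 ≤ d) : (1 : Fin d) ≠ 0 := by
  have h1 : (1 : Fin d).val = 1 % d := Fin.val_one' d
  have : (1 : Fin d).val = 1 := by rw [h1]; exact Nat.mod_eq_of_lt (by omega)
  intro h
  rw [h] at this
  simp at this

lemma setS_eq (f : Fin d → ℝ) :
    {x : ℝ | ∃ k : Fin d, k ≠ 0 ∧ x = f k} = f '' {k | k ≠ 0} := by
  ext x
  simp [Set.mem_image, eq_comm, and_comm]

lemma setS_finite (f : Fin d → ℝ) : {x : ℝ | ∃ k : Fin d, k ≠ 0 ∧ x = f k}.Finite := by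
  rw [setS_eq]; exact (Set.toFinite _).image f

lemma setS_nonempty (hd : 2 ≤ d) (f : Fin d → ℝ) :
    {x : ℝ | ∃ k : Fin d, k ≠ 0 ∧ x = f k}.Nonempty :=
  ⟨f 1, 1, fin_one_ne_zero hd, rfl⟩

lemma setS_bdd (f : Fin d → ℝ) : BddBelow {x : ℝ | ∃ k : Fin d, k ≠ 0 ∧ x = f k} :=
  (setS_finite f).bddBelow

lemma part2 (a : (k : Fin d) → Fin (n k) → 𝕜) (i : {k : Fin d // k ≠ 0}) :
    sInf { x : ℝ | ∃ k : Fin d, k ≠ 0 ∧ x = eunorm (a k) ^ 2 }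
      ≤ (Matrix.isHermitian_conjTranspose_mul_self (Kmx a)).eigenvalues i := by
  have hH := Matrix.isHermitian_conjTranspose_mul_self (Kmx a)
  set v : {k : Fin d // k ≠ 0} → 𝕜 := ⇑(hH.eigenvectorBasis i) with hv
  have hnorm : ∑ j, ‖v j‖ ^ 2 = 1 := by
    have h1 : ‖hH.eigenvectorBasis i‖ = 1 := hH.eigenvectorBasis.orthonormal.1 i
    have h2 := EuclideanSpace.norm_eq (hH.eigenvectorBasis i)
    rw [h1] at h2
    have h3 := congrArg (· ^ 2) h2
    simpa [Real.sq_sqrt (Finset.sum_nonneg fun _ _ => sq_nonneg _)] using h3.symm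
  rw [hH.eigenvalues_eq i, ← hv, gram_quad]
  have hle : ∀ j : {k : Fin d // k ≠ 0},
      sInf { x : ℝ | ∃ k : Fin d, k ≠ 0 ∧ x = eunorm (a k) ^ 2 } ≤ ∑ x, ‖a j.1 x‖ ^ 2 := by
    intro j
    rw [← eunorm_sq]
    exact csInf_le (setS_bdd _) ⟨j.1, j.2, rfl⟩
  calc sInf { x : ℝ | ∃ k : Fin d, k ≠ 0 ∧ x = eunorm (a k) ^ 2 }
      = ∑ j, sInf { x : ℝ | ∃ k : Fin d, k ≠ 0 ∧ x = eunorm (a k) ^ 2 } * ‖v j‖ ^ 2 := by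
        rw [← Finset.mul_sum, hnorm, mul_one]
    _ ≤ ∑ j, (∑ x, ‖a j.1 x‖ ^ 2) * ‖v j‖ ^ 2 :=
        Finset.sum_le_sum fun j _ => mul_le_mul_of_nonneg_right (hle j) (sq_nonneg _)
    _ ≤ _ := le_add_of_nonneg_right
        (mul_nonneg (Finset.sum_nonneg fun _ _ => sq_nonneg _) (sq_nonneg _))


lemma card_ne_zero' : Fintype.card {k : Fin d // k ≠ 0} = d - 1 := by
  have := Fintype.card_subtype_compl (fun k : Fin d => k = 0)
  simpa [Fintype.card_subtype_eq] using this

lemma sInf_sq_le (hd : 2 ≤ d) (a : (k : Fin d) → Fin (n k) → 𝕜) :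
    (sInf { x : ℝ | ∃ k : Fin d, k ≠ 0 ∧ x = eunorm (a k) }) ^ 2
      ≤ sInf { x : ℝ | ∃ k : Fin d, k ≠ 0 ∧ x = eunorm (a k) ^ 2 } := by
  refine le_csInf (setS_nonempty hd _) ?_
  rintro b ⟨k, hk, rfl⟩
  have h1 : sInf { x : ℝ | ∃ k : Fin d, k ≠ 0 ∧ x = eunorm (a k) } ≤ eunorm (a k) :=
    csInf_le (setS_bdd _) ⟨k, hk, rfl⟩
  have h0 : 0 ≤ sInf { x : ℝ | ∃ k : Fin d, k ≠ 0 ∧ x = eunorm (a k) } := by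
    obtain ⟨k0, hk0, he⟩ := (setS_nonempty hd fun k => eunorm (a k)).csInf_mem (setS_finite _)
    rw [he]; exact eunorm_nonneg _
  exact pow_le_pow_left₀ h0 h1 2

lemma sInf_nonneg' (hd : 2 ≤ d) (a : (k : Fin d) → Fin (n k) → 𝕜) :
    0 ≤ sInf { x : ℝ | ∃ k : Fin d, k ≠ 0 ∧ x = eunorm (a k) } := by
  obtain ⟨k0, hk0, he⟩ := (setS_nonempty hd fun k => eunorm (a k)).csInf_mem (setS_finite _)
  rw [he]; exact eunorm_nonneg _

lemma sInf_sq_nonneg (hd : 2 ≤ d) (a : (k : Fin d) → Fin (n k) → 𝕜) :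
    0 ≤ sInf { x : ℝ | ∃ k : Fin d, k ≠ 0 ∧ x = eunorm (a k) ^ 2 } := by
  obtain ⟨k0, hk0, he⟩ := (setS_nonempty hd fun k => eunorm (a k) ^ 2).csInf_mem (setS_finite _)
  rw [he]; exact sq_nonneg _

lemma eig_nonneg (hd : 2 ≤ d) (a : (k : Fin d) → Fin (n k) → 𝕜) (i : {k : Fin d // k ≠ 0}) :
    0 ≤ (Matrix.isHermitian_conjTranspose_mul_self (Kmx a)).eigenvalues i :=
  le_trans (sInf_sq_nonneg hd a) (part2 a i)

lemma part3 (hd : 2 ≤ d) (a : (k : Fin d) → Fin (n k) → 𝕜) :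
    sInf { x : ℝ | ∃ k : Fin d, k ≠ 0 ∧ x = eunorm (a k) } ≤ nthSV (Kmx a) (d - 1) := by
  set L := (((singularValues (Kmx a)).sort (· ≤ ·)).reverse) with hL
  have hlen : L.length = d - 1 := by
    rw [hL, List.length_reverse, Multiset.length_sort, singularValues, Multiset.card_map]
    simpa using card_ne_zero' (d := d)
  have hidx : d - 1 - 1 < L.length := by rw [hlen]; omega
  have hmemL : nthSV (Kmx a) (d - 1) ∈ L := by
    rw [nthSV, ← hL, List.getD_eq_getElem _ _ hidx]
    exact List.getElem_mem _
  rw [hL, List.mem_reverse, Multiset.mem_sort] at hmemL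
  rw [singularValues, Multiset.mem_map] at hmemL
  obtain ⟨i, -, hi⟩ := hmemL
  rw [← hi]
  rw [Real.le_sqrt (sInf_nonneg' hd a)
    (eig_nonneg hd a i)]
  exact le_trans (sInf_sq_le hd a) (part2 a i)


lemma eunorm_pos {ι : Type*} [Fintype ι] {v : ι → 𝕜} (hv : v ≠ 0) : 0 < eunorm v := by
  rw [eunorm, Real.sqrt_pos]
  have hex : ∃ i, v i ≠ 0 := by
    by_contra h; push_neg at h; exact hv (funext h)
  obtain ⟨i, hi⟩ := hex
  exact lt_of_lt_of_le (pow_pos (norm_pos_iff.mpr hi) 2)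
    (Finset.single_le_sum (fun j _ => sq_nonneg ‖v j‖) (Finset.mem_univ i))

lemma part4 (hd : 2 ≤ d) (a : (k : Fin d) → Fin (n k) → 𝕜) (ha : ∀ k, a k ≠ 0) :
    specNorm (((Kmx a)ᴴ * Kmx a)⁻¹ * (Kmx a)ᴴ)
      ≤ (sInf { x : ℝ | ∃ k : Fin d, k ≠ 0 ∧ x = eunorm (a k) })⁻¹ := by
  set m := sInf { x : ℝ | ∃ k : Fin d, k ≠ 0 ∧ x = eunorm (a k) } with hm
  have hmpos : 0 < m := by
    obtain ⟨k0, hk0, he⟩ := (setS_nonempty hd fun k => eunorm (a k)).csInf_mem (setS_finite _)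
    rw [hm, he]; exact eunorm_pos (ha k0)
  have hm2S : m ^ 2 ≤ sInf { x : ℝ | ∃ k : Fin d, k ≠ 0 ∧ x = eunorm (a k) ^ 2 } :=
    sInf_sq_le hd a
  have heig : ∀ i : {k : Fin d // k ≠ 0},
      (0:ℝ) < (Matrix.isHermitian_conjTranspose_mul_self (Kmx a)).eigenvalues i := fun i =>
    lt_of_lt_of_le (pow_pos hmpos 2) (le_trans hm2S (part2 a i))
  have hdet : ((Kmx a)ᴴ * Kmx a).det ≠ 0 := by
    rw [(Matrix.isHermitian_conjTranspose_mul_self (Kmx a)).det_eq_prod_eigenvalues]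
    refine Finset.prod_ne_zero_iff.mpr fun i _ => ?_
    exact_mod_cast ne_of_gt (heig i)
  have hGinv : ((Kmx a)ᴴ * Kmx a) * ((Kmx a)ᴴ * Kmx a)⁻¹ = 1 :=
    Matrix.mul_nonsing_inv _ (isUnit_iff_ne_zero.mpr hdet)
  refine Real.sSup_le ?_ (inv_nonneg.mpr hmpos.le)
  rintro x ⟨v, hv1, rfl⟩
  set w := (((Kmx a)ᴴ * Kmx a)⁻¹ * (Kmx a)ᴴ) *ᵥ v with hw
  set u := Kmx a *ᵥ w with hu
  set E := ∑ q, ‖u q‖ ^ 2 with hE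
  set W := ∑ j, ‖w j‖ ^ 2 with hW
  have hEnn : 0 ≤ E := Finset.sum_nonneg fun _ _ => sq_nonneg _
  have hV1 : ∑ q, ‖v q‖ ^ 2 = 1 := by
    have := eunorm_sq v
    rw [hv1, one_pow] at this
    exact this.symm
  have hGw : ((Kmx a)ᴴ * Kmx a) *ᵥ w = (Kmx a)ᴴ *ᵥ v := by
    rw [hw, Matrix.mulVec_mulVec, ← Matrix.mul_assoc, hGinv, Matrix.one_mul]
  have hQE : RCLike.re (dotProduct (star w) (((Kmx a)ᴴ * Kmx a) *ᵥ w)) = E := by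
    have h1 : dotProduct (star w) (((Kmx a)ᴴ * Kmx a) *ᵥ w)
        = dotProduct (star u) u := by
      rw [← Matrix.mulVec_mulVec, Matrix.dotProduct_mulVec, ← Matrix.star_mulVec, ← hu]
    rw [h1]
    have h2 : dotProduct (star u) u = ((E : ℝ) : 𝕜) := by
      rw [dotProduct, hE]
      push_cast
      refine Finset.sum_congr rfl fun q _ => ?_
      rw [Pi.star_apply, RCLike.star_def, RCLike.conj_mul]
    rw [h2, RCLike.ofReal_re]
  have hEv : E = RCLike.re (dotProduct (star u) v) := by
    rw [← hQE, hGw, Matrix.dotProduct_mulVec, ← Matrix.star_mulVec, ← hu]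
  have hE1 : E ≤ 1 := by
    have hcs : (∑ q, ‖u q‖ * ‖v q‖) ^ 2 ≤ E * 1 := by
      rw [hE, ← hV1]
      exact Finset.sum_mul_sq_le_sq_mul_sq _ _ _
    have hsumnn : 0 ≤ ∑ q, ‖u q‖ * ‖v q‖ :=
      Finset.sum_nonneg fun q _ => mul_nonneg (norm_nonneg _) (norm_nonneg _)
    have hEle : E ≤ Real.sqrt E := by
      calc E = RCLike.re (dotProduct (star u) v) := hEv
        _ ≤ ‖dotProduct (star u) v‖ := RCLike.re_le_norm _
        _ ≤ ∑ q, ‖u q‖ * ‖v q‖ := by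
            rw [dotProduct]
            refine le_trans (norm_sum_le _ _) (Finset.sum_le_sum fun q _ => ?_)
            rw [norm_mul, Pi.star_apply, norm_star]
        _ ≤ Real.sqrt E := by
            rw [Real.le_sqrt hsumnn hEnn]
            linarith [hcs]
    nlinarith [Real.sq_sqrt hEnn, Real.sqrt_nonneg E]
  have hmW : m ^ 2 * W ≤ E := by
    rw [← hQE, gram_quad]
    have hle : ∀ j : {k : Fin d // k ≠ 0}, m ^ 2 ≤ ∑ x, ‖a j.1 x‖ ^ 2 := fun j => by
      rw [← eunorm_sq]
      exact pow_le_pow_left₀ hmpos.le (csInf_le (setS_bdd _) ⟨j.1, j.2, rfl⟩) 2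
    calc m ^ 2 * W = ∑ j, m ^ 2 * ‖w j‖ ^ 2 := by rw [hW, Finset.mul_sum]
      _ ≤ ∑ j, (∑ x, ‖a j.1 x‖ ^ 2) * ‖w j‖ ^ 2 :=
          Finset.sum_le_sum fun j _ => mul_le_mul_of_nonneg_right (hle j) (sq_nonneg _)
      _ ≤ _ := le_add_of_nonneg_right
          (mul_nonneg (Finset.sum_nonneg fun _ _ => sq_nonneg _) (sq_nonneg _))
  have hWle : W ≤ (m⁻¹) ^ 2 := by
    have hm2 : (0:ℝ) < m ^ 2 := pow_pos hmpos 2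
    have key : W * m ^ 2 ≤ 1 := by nlinarith
    have h' : W ≤ 1 / m ^ 2 := (le_div_iff₀ hm2).mpr key
    rw [inv_pow, ← one_div]
    exact h'
  calc eunorm ((((Kmx a)ᴴ * Kmx a)⁻¹ * (Kmx a)ᴴ) *ᵥ v) = Real.sqrt W := by rw [eunorm, ← hw, hW]
    _ ≤ Real.sqrt ((m⁻¹) ^ 2) := Real.sqrt_le_sqrt hWle
    _ = m⁻¹ := Real.sqrt_sq (inv_nonneg.mpr hmpos.le)

end Aux

/-- the Gram matrix of the kernel-basis matrix `K` is
`diag(‖a^{(2)}‖²,…,‖a^{(d)}‖²) + ‖a^{(1)}‖²·𝟙𝟙ᵀ`; every eigenvalue is at least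
`min_{2≤k≤d}‖a^{(k)}‖²`, the least singular value of `K` is at least
`min_{2≤k≤d}‖a^{(k)}‖`, and the Moore–Penrose pseudoinverse `K† = (KᴴK)⁻¹Kᴴ`
satisfies `‖K†‖₂ ≤ (min_{2≤k≤d}‖a^{(k)}‖)⁻¹`. -/
theorem kernel_gram_and_pseudoinverse [NeZero d]
    (hd : 2 ≤ d) (hn : ∀ k, 2 ≤ n k)
    (a : (k : Fin d) → Fin (n k) → 𝕜) :
    (Kmx a)ᴴ * Kmx a
      = Matrix.diagonal (fun j : {k : Fin d // k ≠ 0} => ((eunorm (a j.1) ^ 2 : ℝ) : 𝕜))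
        + ((eunorm (a 0) ^ 2 : ℝ) : 𝕜) •
            Matrix.of (fun _ _ : {k : Fin d // k ≠ 0} => (1 : 𝕜))
    ∧ (∀ i : {k : Fin d // k ≠ 0},
        sInf { x : ℝ | ∃ k : Fin d, k ≠ 0 ∧ x = eunorm (a k) ^ 2 }
          ≤ (Matrix.isHermitian_conjTranspose_mul_self (Kmx a)).eigenvalues i)
    ∧ sInf { x : ℝ | ∃ k : Fin d, k ≠ 0 ∧ x = eunorm (a k) } ≤ nthSV (Kmx a) (d - 1)
    ∧ ((∀ k, a k ≠ 0) →
        specNorm (((Kmx a)ᴴ * Kmx a)⁻¹ * (Kmx a)ᴴ)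
          ≤ (sInf { x : ℝ | ∃ k : Fin d, k ≠ 0 ∧ x = eunorm (a k) })⁻¹) := by
  exact ⟨part1 a, fun i => part2 a i, part3 hd a, fun ha => part4 hd a ha⟩

end TensorCond
end
end
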